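/- Let n ≥ 2 be an integer and let f₁(r) = −1 + Σ_{m=1}^∞ [m·(2m−2)! / (2^{3m−1}·(m!)²·∏_{j=0}^{m−1}(n+2j))]·r^{2m}. Then there exists R > 0 such that f₁(r) > e^{r²/8} for all r > R. -/

import Mathlib

noncomputable def hplaneCoef (n m : ℕ) : ℝ :=
  ((m : ℝ) * (Nat.factorial (2*m - 2) : ℝ)) /
    ((2:ℝ)^(3*m - 1) * ((Nat.factorial m : ℝ))^2 *
      ∏ j ∈ Finset.range m, ((n : ℝ) + 2*(j : ℝ)))

noncomputable def fOne (n : ℕ) (r : ℝ) : ℝ :=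
  -1 + ∑' m : ℕ, hplaneCoef n (m+1) * r^(2*(m+1))

open Finset

lemma fact_two_mul_le (m : ℕ) : Nat.factorial (2*m) ≤ 4^m * (Nat.factorial m)^2 := by
  induction m with
  | zero => simp
  | succ m ih =>
    have h2 : 2*(m+1) = (2*m+1) + 1 := by ring
    rw [h2, Nat.factorial_succ, Nat.factorial_succ, Nat.factorial_succ]
    have h3 : (2*m+1) + 1 ≤ 2*(m+1) := by omega
    calc ((2*m+1)+1) * ((2*m+1) * Nat.factorial (2*m))
        ≤ (2*(m+1)) * ((2*(m+1)) * (4^m * (Nat.factorial m)^2)) := by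
          apply Nat.mul_le_mul h3
          exact Nat.mul_le_mul (by omega) ih
      _ = 4^(m+1) * ((m+1) * Nat.factorial m)^2 := by ring

lemma prod_pos' (n : ℕ) (hn : 1 ≤ n) (m : ℕ) :
    0 < ∏ j ∈ Finset.range m, ((n : ℝ) + 2*(j : ℝ)) := by
  apply Finset.prod_pos
  intro j _
  have h1 : (1:ℝ) ≤ (n:ℝ) := by exact_mod_cast hn
  have h2 : (0:ℝ) ≤ (j:ℝ) := Nat.cast_nonneg j
  linarith

lemma prod_ge (n : ℕ) (hn : 2 ≤ n) (m : ℕ) :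
    (2:ℝ)^m * (Nat.factorial m : ℝ) ≤ ∏ j ∈ Finset.range m, ((n : ℝ) + 2*(j : ℝ)) := by
  have hnat : (2^m * Nat.factorial m : ℕ) = ∏ j ∈ Finset.range m, (2*(j+1)) := by
    rw [Finset.prod_mul_distrib, Finset.prod_const, Finset.card_range,
      Finset.prod_range_add_one_eq_factorial]
  have : (2:ℝ)^m * (Nat.factorial m : ℝ) = ∏ j ∈ Finset.range m, (2*((j:ℝ)+1)) := by
    have := congrArg (fun k : ℕ => (k:ℝ)) hnat
    push_cast at this
    simpa using this
  rw [this]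
  apply Finset.prod_le_prod
  · intro j _; positivity
  · intro j _
    have h1 : (2:ℝ) ≤ (n:ℝ) := by exact_mod_cast hn
    linarith

lemma hplaneCoef_succ (n k : ℕ) : hplaneCoef n (k+1) =
    (((k:ℝ)+1) * (Nat.factorial (2*k) : ℝ)) /
    ((2:ℝ)^(3*k+2) * ((Nat.factorial (k+1) : ℝ))^2 *
      ∏ j ∈ Finset.range (k+1), ((n : ℝ) + 2*(j : ℝ))) := by
  have h1 : 2*(k+1) - 2 = 2*k := by omega
  have h2 : 3*(k+1) - 1 = 3*k+2 := by omega
  rw [hplaneCoef, h1, h2]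
  norm_cast

lemma hplaneCoef_pos (n : ℕ) (hn : 1 ≤ n) (k : ℕ) : 0 < hplaneCoef n (k+1) := by
  rw [hplaneCoef_succ]
  have hp := prod_pos' n hn (k+1)
  have hf : 0 < (Nat.factorial (2*k) : ℝ) := by exact_mod_cast Nat.factorial_pos _
  have hf2 : 0 < (Nat.factorial (k+1) : ℝ) := by exact_mod_cast Nat.factorial_pos _
  positivity

lemma hplaneCoef_le (n : ℕ) (hn : 2 ≤ n) (k : ℕ) :
    hplaneCoef n (k+1) ≤ 1 / ((4:ℝ)^(k+1) * (Nat.factorial (k+1) : ℝ)) := by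
  rw [hplaneCoef_succ]
  have hp := prod_pos' n (by omega) (k+1)
  have hpge := prod_ge n hn (k+1)
  have hf : 0 < (Nat.factorial (2*k) : ℝ) := by exact_mod_cast Nat.factorial_pos _
  have hf2 : 0 < (Nat.factorial (k+1) : ℝ) := by exact_mod_cast Nat.factorial_pos _
  have hf1 : 0 < (Nat.factorial k : ℝ) := by exact_mod_cast Nat.factorial_pos _
  rw [div_le_div_iff₀ (by positivity) (by positivity), one_mul]
  have hfact : (Nat.factorial (2*k) : ℝ) ≤ 4^k * (Nat.factorial k : ℝ)^2 := by
    exact_mod_cast fact_two_mul_le k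
  calc (((k:ℝ)+1) * (Nat.factorial (2*k) : ℝ)) * ((4:ℝ)^(k+1) * (Nat.factorial (k+1) : ℝ))
      ≤ (((k:ℝ)+1) * (4^k * (Nat.factorial k : ℝ)^2)) * ((4:ℝ)^(k+1) * (Nat.factorial (k+1) : ℝ)) := by
        apply mul_le_mul_of_nonneg_right _ (by positivity)
        apply mul_le_mul_of_nonneg_left hfact (by positivity)
    _ ≤ (2:ℝ)^(3*k+2) * ((Nat.factorial (k+1) : ℝ))^2 * ((2:ℝ)^(k+1) * (Nat.factorial (k+1) : ℝ)) := by
        have hkf : ((k:ℝ)+1) * (Nat.factorial k : ℝ) = (Nat.factorial (k+1) : ℝ) := by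
          rw [Nat.factorial_succ]; push_cast; ring
        have hle : (Nat.factorial k : ℝ) ≤ (Nat.factorial (k+1) : ℝ) := by
          exact_mod_cast Nat.factorial_le (by omega)
        have h4 : (4:ℝ)^k = 2^(2*k) := by rw [show (4:ℝ) = 2^2 by norm_num, ← pow_mul]
        have h41 : (4:ℝ)^(k+1) = 2^(2*k+2) := by rw [show (4:ℝ) = 2^2 by norm_num, ← pow_mul]; ring_nf
        rw [h4, h41]
        have key : ((k:ℝ)+1) * (Nat.factorial k : ℝ)^2 * (Nat.factorial (k+1):ℝ)
            ≤ ((Nat.factorial (k+1) : ℝ))^2 * (Nat.factorial (k+1) : ℝ) := by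
          have : ((k:ℝ)+1) * (Nat.factorial k : ℝ)^2 = (Nat.factorial (k+1):ℝ) * (Nat.factorial k:ℝ) := by
            rw [← hkf]; ring
          rw [this]
          have := mul_le_mul_of_nonneg_left hle (le_of_lt hf2)
          nlinarith [hf2, hle]
        have hpow : (2:ℝ)^(2*k) * (2:ℝ)^(2*k+2) ≤ (2:ℝ)^(3*k+2) * (2:ℝ)^(k+1) := by
          rw [← pow_add, ← pow_add]
          apply pow_le_pow_right₀ (by norm_num) (by omega)
        calc ((k:ℝ)+1) * ((2:ℝ)^(2*k) * (Nat.factorial k : ℝ)^2) * ((2:ℝ)^(2*k+2) * (Nat.factorial (k+1) : ℝ))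
            = ((2:ℝ)^(2*k) * (2:ℝ)^(2*k+2)) * (((k:ℝ)+1) * (Nat.factorial k : ℝ)^2 * (Nat.factorial (k+1):ℝ)) := by ring
          _ ≤ ((2:ℝ)^(3*k+2) * (2:ℝ)^(k+1)) * (((Nat.factorial (k+1) : ℝ))^2 * (Nat.factorial (k+1) : ℝ)) := by
              apply mul_le_mul hpow key (by positivity) (by positivity)
          _ = (2:ℝ)^(3*k+2) * ((Nat.factorial (k+1) : ℝ))^2 * ((2:ℝ)^(k+1) * (Nat.factorial (k+1) : ℝ)) := by ring
    _ ≤ (2:ℝ)^(3*k+2) * ((Nat.factorial (k+1) : ℝ))^2 * (∏ j ∈ Finset.range (k+1), ((n : ℝ) + 2*(j : ℝ))) := by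
        apply mul_le_mul_of_nonneg_left hpge (by positivity)

lemma hplaneCoef_rec (n : ℕ) (hn : 1 ≤ n) (k : ℕ) :
    hplaneCoef n (k+2) * (4*((k:ℝ)+2)*((n:ℝ)+2*(k:ℝ)+2)) = hplaneCoef n (k+1) * (2*(k:ℝ)+1) := by
  rw [hplaneCoef_succ, hplaneCoef_succ]
  have hfact : (Nat.factorial (2*(k+1)) : ℝ) = (2*(k:ℝ)+2) * ((2*(k:ℝ)+1) * (Nat.factorial (2*k) : ℝ)) := by
    have : 2*(k+1) = (2*k+1)+1 := by omega
    rw [this, Nat.factorial_succ, Nat.factorial_succ]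
    push_cast; ring
  have hfact2 : (Nat.factorial (k+2) : ℝ) = ((k:ℝ)+2) * (Nat.factorial (k+1) : ℝ) := by
    rw [show k+2 = (k+1)+1 from rfl, Nat.factorial_succ]
    push_cast; ring
  have hprod : (∏ j ∈ Finset.range (k+2), ((n : ℝ) + 2*(j : ℝ)))
      = (∏ j ∈ Finset.range (k+1), ((n : ℝ) + 2*(j : ℝ))) * ((n:ℝ) + 2*((k:ℝ)+1)) := by
    rw [Finset.prod_range_succ]; push_cast; ring
  rw [hfact, hfact2, hprod]
  have hp := prod_pos' n hn (k+1)
  have hf2 : 0 < (Nat.factorial (k+1) : ℝ) := by exact_mod_cast Nat.factorial_pos _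
  have hnn : (0:ℝ) < (n:ℝ) + 2*((k:ℝ)+1) := by
    have : (1:ℝ) ≤ (n:ℝ) := by exact_mod_cast hn
    positivity
  have hpow : (2:ℝ)^(3*(k+1)+2) = 8 * (2:ℝ)^(3*k+2) := by
    rw [show 3*(k+1)+2 = (3*k+2)+3 by omega, pow_add]; ring
  rw [hpow]
  field_simp
  push_cast; ring

noncomputable def rho (n m : ℕ) : ℝ := hplaneCoef n m * 8^m * (Nat.factorial m : ℝ)

lemma rho_pos (n : ℕ) (hn : 1 ≤ n) (k : ℕ) : 0 < rho n (k+1) := by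
  have := hplaneCoef_pos n hn k
  have hf : 0 < (Nat.factorial (k+1) : ℝ) := by exact_mod_cast Nat.factorial_pos _
  unfold rho; positivity

lemma rho_rec (n : ℕ) (hn : 1 ≤ n) (k : ℕ) :
    rho n (k+2) * ((n:ℝ)+2*(k:ℝ)+2) = rho n (k+1) * (2*(2*(k:ℝ)+1)) := by
  have h := hplaneCoef_rec n hn k
  have hfact2 : (Nat.factorial (k+2) : ℝ) = ((k:ℝ)+2) * (Nat.factorial (k+1) : ℝ) := by
    rw [show k+2 = (k+1)+1 from rfl, Nat.factorial_succ]
    push_cast; ring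
  have hk2 : (0:ℝ) < (k:ℝ)+2 := by positivity
  unfold rho
  rw [hfact2, pow_succ]
  linear_combination (2 * 8^(k+1) * (Nat.factorial (k+1):ℝ)) * h

lemma rho_grow (n : ℕ) (hn : 1 ≤ n) (k : ℕ) (hk : 2*n+1 ≤ k) :
    (3/2) * rho n (k+1) ≤ rho n (k+2) := by
  have h := rho_rec n hn k
  have hpos := rho_pos n hn k
  have hnn : (0:ℝ) < (n:ℝ)+2*(k:ℝ)+2 := by positivity
  have hkn : 3*(n:ℝ) + 2 ≤ 2*(k:ℝ) := by
    have : (2*n+1 : ℝ) ≤ (k:ℝ) := by exact_mod_cast hk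
    have h1 : (1:ℝ) ≤ (n:ℝ) := by exact_mod_cast hn
    linarith
  -- 2(2k+1)/(n+2k+2) ≥ 3/2  ⟺ 8k+4 ≥ 3n+6k+6 ⟺ 2k ≥ 3n+2
  nlinarith [rho_pos n hn (k+1)]

lemma exists_M (n : ℕ) (hn : 2 ≤ n) : ∃ M : ℕ, 2 ≤ M ∧
    ∀ m, M ≤ m → (2:ℝ)/((8:ℝ)^m * (Nat.factorial m : ℝ)) ≤ hplaneCoef n m := by
  have hn1 : 1 ≤ n := by omega
  have hρ0 : 0 < rho n (2*n+2) := rho_pos n hn1 (2*n+1)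
  have hind : ∀ j : ℕ, rho n (2*n+2) * (3/2)^j ≤ rho n (2*n+2+j) := by
    intro j
    induction j with
    | zero => simp
    | succ j ih =>
      have hg := rho_grow n hn1 (2*n+1+j) (by omega)
      have he1 : 2*n+1+j+1 = 2*n+2+j := by omega
      have he2 : 2*n+1+j+2 = 2*n+2+(j+1) := by omega
      rw [he1, he2] at hg
      calc rho n (2*n+2) * (3/2)^(j+1) = (3/2) * (rho n (2*n+2) * (3/2)^j) := by ring
      _ ≤ (3/2) * rho n (2*n+2+j) := by linarith
      _ ≤ rho n (2*n+2+(j+1)) := hg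
  obtain ⟨k, hk⟩ := pow_unbounded_of_one_lt (2 / rho n (2*n+2)) (by norm_num : (1:ℝ) < 3/2)
  refine ⟨2*n+2+k, by omega, ?_⟩
  intro m hm
  have h2 : 2 ≤ rho n m := by
    obtain ⟨j, rfl⟩ : ∃ j, m = 2*n+2+j := ⟨m - (2*n+2), by omega⟩
    have hjk : k ≤ j := by omega
    have h1 : (3/2:ℝ)^k ≤ (3/2)^j := pow_le_pow_right₀ (by norm_num) hjk
    have h3 : 2 < rho n (2*n+2) * (3/2)^k := by
      rw [div_lt_iff₀ hρ0] at hk; linarith [hk]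
    have h4 := hind j
    nlinarith
  have hf : 0 < (Nat.factorial m : ℝ) := by exact_mod_cast Nat.factorial_pos _
  rw [div_le_iff₀ (by positivity)]
  unfold rho at h2
  linarith [h2]

/-- There exists `R > 0` such that `f₁(r) > e^{r²/8}` for all `r > R`. -/
theorem stmt17 (n : ℕ) (hn : 2 ≤ n) :
    ∃ R : ℝ, 0 < R ∧ ∀ r : ℝ, R < r → Real.exp (r^2/8) < fOne n r := by
  obtain ⟨M, hM2, hMc⟩ := exists_M n hn
  have hMf : (0:ℝ) < (Nat.factorial (M+1) : ℝ) := by exact_mod_cast Nat.factorial_pos _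
  set C : ℝ := 2*(M:ℝ)*(Nat.factorial (M+1) : ℝ) + 1 with hCdef
  have hC : 0 < 8*C := by positivity
  refine ⟨Real.sqrt (8*C), Real.sqrt_pos.2 hC, ?_⟩
  intro r hr
  have hRnon : 0 ≤ Real.sqrt (8*C) := Real.sqrt_nonneg _
  have hr0 : 0 < r := lt_of_le_of_lt hRnon hr
  have hsq : 8*C < r^2 := by
    have h1 : Real.sqrt (8*C)^2 = 8*C := Real.sq_sqrt (le_of_lt hC)
    nlinarith
  set x : ℝ := r^2/8 with hxdef
  have hxC : C < x := by rw [hxdef]; linarith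
  have hx1 : 1 < x := by
    have : (0:ℝ) ≤ 2*(M:ℝ)*(Nat.factorial (M+1) : ℝ) := by positivity
    linarith
  have hx0 : 0 < x := by linarith
  -- the series
  set t : ℕ → ℝ := fun m => hplaneCoef n m * r^(2*m) with htdef
  set v : ℕ → ℝ := fun m => x^m / (Nat.factorial m : ℝ) with hvdef
  have ht0 : t 0 = 0 := by simp [htdef, hplaneCoef]
  have htnonneg : ∀ m, 0 ≤ t m := by
    intro m
    match m with
    | 0 => rw [ht0]
    | k+1 =>
      have := hplaneCoef_pos n (by omega) k
      have : 0 ≤ hplaneCoef n (k+1) := le_of_lt this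
      have hrp : 0 ≤ r^(2*(k+1)) := by positivity
      exact mul_nonneg this hrp
  have htle : ∀ m, t m ≤ (r^2/4)^m / (Nat.factorial m : ℝ) := by
    intro m
    match m with
    | 0 => simp [ht0]
    | k+1 =>
      have hle := hplaneCoef_le n hn k
      have hrp : (0:ℝ) ≤ r^(2*(k+1)) := by positivity
      have h2 : t (k+1) ≤ (1 / ((4:ℝ)^(k+1) * (Nat.factorial (k+1) : ℝ))) * r^(2*(k+1)) :=
        mul_le_mul_of_nonneg_right hle hrp
      refine le_trans h2 (le_of_eq ?_)
      have hfk : (0:ℝ) < (Nat.factorial (k+1) : ℝ) := by exact_mod_cast Nat.factorial_pos _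
      rw [pow_mul, div_pow]
      field_simp
  have hsum_t : Summable t := by
    apply Summable.of_nonneg_of_le htnonneg htle
    exact Real.summable_pow_div_factorial (r^2/4)
  have hsum_v : Summable v := Real.summable_pow_div_factorial x
  have hexp_tsum : Real.exp x = ∑' m, v m := by
    rw [Real.exp_eq_exp_ℝ, NormedSpace.exp_eq_tsum_div]
  -- lower bound for tail of t
  have htail : ∀ m : ℕ, 2 * v (m + M) ≤ t (m + M) := by
    intro m
    have hc := hMc (m + M) (by omega)
    have key : t (m+M) = hplaneCoef n (m+M) * (r^2)^(m+M) := by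
      rw [htdef]; simp only []; rw [pow_mul]
    rw [key, hvdef]
    simp only []
    have hrp : (0:ℝ) ≤ (r^2)^(m+M) := by positivity
    have h3 : (2:ℝ)/((8:ℝ)^(m+M) * (Nat.factorial (m+M) : ℝ)) * (r^2)^(m+M)
        ≤ hplaneCoef n (m+M) * (r^2)^(m+M) := mul_le_mul_of_nonneg_right hc hrp
    refine le_trans (le_of_eq ?_) h3
    have hfk : (0:ℝ) < (Nat.factorial (m+M) : ℝ) := by exact_mod_cast Nat.factorial_pos _
    rw [hxdef, div_pow]
    field_simp
  have hsum_tshift : Summable (fun m => t (m + M)) := (summable_nat_add_iff M).2 hsum_t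
  have hsum_vshift : Summable (fun m => 2 * v (m + M)) :=
    ((summable_nat_add_iff M).2 hsum_v).mul_left 2
  have h6 : ∑' m, 2 * v (m + M) ≤ ∑' m, t (m + M) :=
    Summable.tsum_le_tsum htail hsum_vshift hsum_tshift
  have h5 : ∑' m, 2 * v (m + M) = 2 * (Real.exp x - ∑ m ∈ Finset.range M, v m) := by
    rw [tsum_mul_left]
    have := Summable.sum_add_tsum_nat_add M hsum_v
    rw [hexp_tsum]
    linarith [this]
  have h2 : ∑ m ∈ Finset.range M, t m + ∑' m, t (m + M) = ∑' m, t m :=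
    Summable.sum_add_tsum_nat_add M hsum_t
  have h1 : ∑' m, t m = t 0 + ∑' m, t (m+1) := Summable.tsum_eq_zero_add hsum_t
  have hfOne : fOne n r = -1 + ∑' m, t (m+1) := rfl
  have hfin : 0 ≤ ∑ m ∈ Finset.range M, t m :=
    Finset.sum_nonneg (fun m _ => htnonneg m)
  set S : ℝ := ∑ m ∈ Finset.range M, v m with hSdef
  have hlow : -1 + 2*(Real.exp x - S) ≤ fOne n r := by
    rw [hfOne]
    have : 2*(Real.exp x - S) ≤ ∑' m, t (m+1) := by
      have e1 : ∑' m, t (m+1) = ∑' m, t m := by rw [h1, ht0]; ring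
      rw [e1, ← h2]
      linarith [h6, h5, hfin]
    linarith
  -- final elementary estimate: 1 + 2 S < exp x
  have hS : S ≤ (M:ℝ) * x^M := by
    rw [hSdef]
    calc ∑ m ∈ Finset.range M, v m ≤ ∑ m ∈ Finset.range M, x^M := by
          apply Finset.sum_le_sum
          intro m hm
          rw [hvdef]
          simp only []
          have hfm : (1:ℝ) ≤ (Nat.factorial m : ℝ) := by
            exact_mod_cast Nat.one_le_iff_ne_zero.2 (Nat.factorial_pos m).ne'
          have hxm : x^m ≤ x^M :=
            pow_le_pow_right₀ (le_of_lt hx1) (le_of_lt (Finset.mem_range.1 hm))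
          calc x^m / (Nat.factorial m : ℝ) ≤ x^m / 1 := by
                apply div_le_div_of_nonneg_left (by positivity) (by norm_num) hfm
            _ = x^m := by ring
            _ ≤ x^M := hxm
      _ = (M:ℝ) * x^M := by rw [Finset.sum_const, Finset.card_range]; ring
  have hexp_ge : 1 + x + x^(M+1)/(Nat.factorial (M+1) : ℝ) ≤ Real.exp x := by
    have hsum := Real.sum_le_exp_of_nonneg (le_of_lt hx0) (M+2)
    have hsub : ({0, 1, M+1} : Finset ℕ) ⊆ Finset.range (M+2) := by
      intro i hi
      simp only [Finset.mem_insert, Finset.mem_singleton] at hi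
      simp only [Finset.mem_range]
      omega
    have hle2 : ∑ i ∈ ({0, 1, M+1} : Finset ℕ), x^i/(Nat.factorial i : ℝ)
        ≤ ∑ i ∈ Finset.range (M+2), x^i/(Nat.factorial i : ℝ) := by
      apply Finset.sum_le_sum_of_subset_of_nonneg hsub
      intro i _ _
      positivity
    have hval : ∑ i ∈ ({0, 1, M+1} : Finset ℕ), x^i/(Nat.factorial i : ℝ)
        = 1 + x + x^(M+1)/(Nat.factorial (M+1) : ℝ) := by
      rw [Finset.sum_insert (by simp only [Finset.mem_insert, Finset.mem_singleton]; omega),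
        Finset.sum_insert (by simp only [Finset.mem_singleton]; omega),
        Finset.sum_singleton]
      simp [Nat.factorial]
      ring
    linarith
  have hfinal : 1 + 2*S < Real.exp x := by
    have hxM : (0:ℝ) ≤ x^M := by positivity
    have hkey : 2*(M:ℝ)*x^M ≤ x^(M+1)/(Nat.factorial (M+1) : ℝ) := by
      rw [pow_succ, le_div_iff₀ hMf]
      have : 2*(M:ℝ)*(Nat.factorial (M+1):ℝ) ≤ x := by
        rw [hCdef] at hxC; linarith
      nlinarith
    nlinarith [hexp_ge, hS, hx0]
  have : Real.exp (r^2/8) = Real.exp x := by rw [hxdef]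
  rw [this]
  linarith [hlow, hfinal]
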